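/- For every ε ∈ (0, 1), K_ε(l) tends to π·(1 − ε) as the integer l tends to infinity. -/

import Mathlib

open Real

/-- `a_l = (l + √(l² − 4))/2`. -/
noncomputable def al (l : ℝ) : ℝ := (l + Real.sqrt (l ^ 2 - 4)) / 2

/-- `K_ε(l)`, the ε-norm of the derived category of the `l`-Kronecker quiver. -/
noncomputable def Keps (ε l : ℝ) : ℝ :=
  Real.arccos ((Real.cos (π * ε) - al l) /
      Real.sqrt ((al l) ^ 2 + 1 - 2 * al l * Real.cos (π * ε))) -
    Real.arccos ((al l * Real.cos (π * ε) - 1) /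
      Real.sqrt ((al l) ^ 2 + 1 - 2 * al l * Real.cos (π * ε)))

/-- For every `ε ∈ (0, 1)`, `K_ε(l) → π·(1 − ε)` as the integer `l → ∞`. -/
theorem stmt_17 (ε : ℝ) (hε : ε ∈ Set.Ioo (0 : ℝ) 1) :
    Filter.Tendsto (fun l : ℕ => Keps ε (l : ℝ)) Filter.atTop
      (nhds (π * (1 - ε))) := by
  obtain ⟨hε0, hε1⟩ := hε
  have hπ := Real.pi_pos
  set c : ℝ := Real.cos (π * ε) with hc
  have hπε0 : 0 < π * ε := by positivity
  have hπεπ : π * ε < π := by nlinarith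
  have hclt : c < 1 := by
    have := Real.cos_lt_cos_of_nonneg_of_le_pi (le_refl 0) (le_of_lt hπεπ) hπε0
    simpa using this
  have hcgt : -1 < c := by
    have := Real.cos_lt_cos_of_nonneg_of_le_pi (le_of_lt hπε0) (le_refl π) hπεπ
    simpa [Real.cos_pi] using this
  -- al l → ∞
  have hal : Filter.Tendsto (fun l : ℕ => al (l : ℝ)) Filter.atTop Filter.atTop := by
    have h2 : Filter.Tendsto (fun l : ℕ => (l : ℝ) / 2) Filter.atTop Filter.atTop :=
      (tendsto_natCast_atTop_atTop).atTop_div_const (by norm_num)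
    refine Filter.tendsto_atTop_mono (fun l => ?_) h2
    unfold al
    have := Real.sqrt_nonneg ((l : ℝ) ^ 2 - 4)
    linarith
  -- positivity of the denominator
  have hD : ∀ a : ℝ, 0 < a ^ 2 + 1 - 2 * a * c := by
    intro a
    nlinarith [sq_nonneg (a - c)]
  -- first fraction tends to -1
  have h1 : Filter.Tendsto
      (fun a : ℝ => (c - a) / Real.sqrt (a ^ 2 + 1 - 2 * a * c))
      Filter.atTop (nhds (-1)) := by
    have cont : ContinuousAt (fun t : ℝ => (c * t - 1) / Real.sqrt (1 + t ^ 2 - 2 * c * t)) 0 := by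
      apply ContinuousAt.div
      · fun_prop
      · fun_prop
      · simp
    have key := cont.tendsto.comp tendsto_inv_atTop_zero (f := fun a : ℝ => a⁻¹)
    simp only [Function.comp_def] at key
    norm_num at key
    have keyeq : (fun a : ℝ => (c * a⁻¹ - 1) / Real.sqrt (1 + a⁻¹ ^ 2 - 2 * c * a⁻¹))
        =ᶠ[Filter.atTop] fun a : ℝ => (c - a) / Real.sqrt (a ^ 2 + 1 - 2 * a * c) := by
      filter_upwards [Filter.eventually_gt_atTop (0 : ℝ)] with a ha
      have ha' : a ≠ 0 := ne_of_gt ha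
      have hsq : 1 + a⁻¹ ^ 2 - 2 * c * a⁻¹ = (a ^ 2 + 1 - 2 * a * c) / a ^ 2 := by
        field_simp
      rw [hsq, Real.sqrt_div (le_of_lt (hD a)), Real.sqrt_sq (le_of_lt ha)]
      have hS : Real.sqrt (a ^ 2 + 1 - 2 * a * c) > 0 := Real.sqrt_pos.mpr (hD a)
      field_simp
    exact key.congr' (by simpa only [inv_pow] using keyeq)
  -- second fraction tends to c
  have h2 : Filter.Tendsto
      (fun a : ℝ => (a * c - 1) / Real.sqrt (a ^ 2 + 1 - 2 * a * c))
      Filter.atTop (nhds c) := by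
    have cont : ContinuousAt (fun t : ℝ => (c - t) / Real.sqrt (1 + t ^ 2 - 2 * c * t)) 0 := by
      apply ContinuousAt.div
      · fun_prop
      · fun_prop
      · simp
    have key := cont.tendsto.comp tendsto_inv_atTop_zero (f := fun a : ℝ => a⁻¹)
    simp only [Function.comp_def] at key
    norm_num at key
    have keyeq : (fun a : ℝ => (c - a⁻¹) / Real.sqrt (1 + a⁻¹ ^ 2 - 2 * c * a⁻¹))
        =ᶠ[Filter.atTop] fun a : ℝ => (a * c - 1) / Real.sqrt (a ^ 2 + 1 - 2 * a * c) := by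
      filter_upwards [Filter.eventually_gt_atTop (0 : ℝ)] with a ha
      have ha' : a ≠ 0 := ne_of_gt ha
      have hsq : 1 + a⁻¹ ^ 2 - 2 * c * a⁻¹ = (a ^ 2 + 1 - 2 * a * c) / a ^ 2 := by
        field_simp
      rw [hsq, Real.sqrt_div (le_of_lt (hD a)), Real.sqrt_sq (le_of_lt ha)]
      have hS : Real.sqrt (a ^ 2 + 1 - 2 * a * c) > 0 := Real.sqrt_pos.mpr (hD a)
      field_simp
    exact key.congr' (by simpa only [inv_pow] using keyeq)
  -- assemble
  have harc1 : Filter.Tendsto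
      (fun a : ℝ => Real.arccos ((c - a) / Real.sqrt (a ^ 2 + 1 - 2 * a * c)))
      Filter.atTop (nhds π) := by
    have := (Real.continuous_arccos.continuousAt (x := (-1 : ℝ))).tendsto.comp h1
    simpa [Real.arccos_neg_one, Function.comp_def] using this
  have harc2 : Filter.Tendsto
      (fun a : ℝ => Real.arccos ((a * c - 1) / Real.sqrt (a ^ 2 + 1 - 2 * a * c)))
      Filter.atTop (nhds (π * ε)) := by
    have := (Real.continuous_arccos.continuousAt (x := c)).tendsto.comp h2
    have harccos : Real.arccos c = π * ε :=
      Real.arccos_cos (le_of_lt hπε0) (le_of_lt hπεπ)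
    simpa [harccos, Function.comp_def] using this
  have hg : Filter.Tendsto
      (fun a : ℝ => Real.arccos ((c - a) / Real.sqrt (a ^ 2 + 1 - 2 * a * c)) -
        Real.arccos ((a * c - 1) / Real.sqrt (a ^ 2 + 1 - 2 * a * c)))
      Filter.atTop (nhds (π * (1 - ε))) := by
    have := harc1.sub harc2
    simpa [mul_sub] using this
  have := hg.comp hal
  simpa [Function.comp_def, Keps, hc] using this
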